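/- Let p be a prime, F a finite field of characteristic p, and G a finite group. If ρ̄ : G → GL_2(F) is a homomorphism whose image has order prime to p, then there exists a homomorphism ρ̃ : G → GL_2(W(F)) to the Witt vectors of F such that the reduction of ρ̃ modulo p equals ρ̄, and the reduction map induces an isomorphism from ρ̃(G) onto ρ̄(G). -/

import Mathlib

open WittVector TruncatedWittVector

set_option linter.unusedSectionVars false

namespace TLift

variable (p : ℕ) [hp : Fact p.Prime] (F : Type*) [Field F] [Fintype F] [CharP F p]

/-- coefficients of iterated Verschiebung vanish below the iteration amount -/
lemma coeff_iter_versch_eq_zero (x : WittVector p F) {i k : ℕ} (h : i < k) :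
    (verschiebung^[k] x).coeff i = 0 := by
  induction k generalizing i with
  | zero => omega
  | succ k ih =>
    rw [Function.iterate_succ_apply']
    cases i with
    | zero => exact verschiebung_coeff_zero _
    | succ i => rw [verschiebung_coeff_succ]; exact ih (by omega)

lemma exists_iter_versch (k : ℕ) (x : WittVector p F) (h : ∀ i < k, x.coeff i = 0) :
    ∃ a, x = verschiebung^[k] a := by
  induction k generalizing x with
  | zero => exact ⟨x, rfl⟩
  | succ k ih =>
    set y : WittVector p F := WittVector.mk p (fun i => x.coeff (i+1)) with hy
    have hxy : x = verschiebung y := by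
      ext n
      cases n with
      | zero => rw [verschiebung_coeff_zero]; exact h 0 (by omega)
      | succ n => rw [verschiebung_coeff_succ, hy, WittVector.coeff_mk]
    have hyc : ∀ i < k, y.coeff i = 0 := by
      intro i hi
      rw [hy, WittVector.coeff_mk]
      exact h (i+1) (by omega)
    obtain ⟨a, ha⟩ := ih y hyc
    exact ⟨a, by rw [hxy, ha]; exact (Function.iterate_succ_apply' _ _ _).symm⟩

/-- lift of a kernel element of the truncation map as an iterated Verschiebung -/
lemma ker_lift {m : ℕ} (x : TruncatedWittVector p (m+1) F)
    (hx : TruncatedWittVector.truncate (Nat.le_succ m) x = 0) :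
    ∃ a : WittVector p F, WittVector.truncate (m+1) (verschiebung^[m] a) = x := by
  have hcoeff : ∀ i < m, x.out.coeff i = 0 := by
    intro i hi
    rw [TruncatedWittVector.coeff_out x ⟨i, by omega⟩]
    have h2 := TruncatedWittVector.coeff_truncate (p := p) (Nat.le_succ m) ⟨i, hi⟩ x
    rw [hx] at h2
    simp only [TruncatedWittVector.coeff_zero] at h2
    exact h2.symm
  obtain ⟨a, ha⟩ := exists_iter_versch p F m x.out hcoeff
  refine ⟨a, ?_⟩
  rw [← ha]
  exact x.truncateFun_out

lemma trunc_iter_versch_eq_zero {m k : ℕ} (hk : m + 1 ≤ k) (a : WittVector p F) :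
    WittVector.truncate (m+1) (verschiebung^[k] a) = 0 := by
  rw [← RingHom.mem_ker, WittVector.mem_ker_truncate (m+1)]
  intro i hi
  exact coeff_iter_versch_eq_zero p F a (by omega)

lemma ker_mul_eq_zero {m : ℕ} (hm : 1 ≤ m) (x y : TruncatedWittVector p (m+1) F)
    (hx : TruncatedWittVector.truncate (Nat.le_succ m) x = 0)
    (hy : TruncatedWittVector.truncate (Nat.le_succ m) y = 0) : x * y = 0 := by
  obtain ⟨a, ha⟩ := ker_lift p F x hx
  obtain ⟨b, hb⟩ := ker_lift p F y hy
  rw [← ha, ← hb, ← map_mul, iterate_verschiebung_mul]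
  exact trunc_iter_versch_eq_zero p F (by omega) _

lemma ker_pmul_eq_zero {m : ℕ} (x : TruncatedWittVector p (m+1) F)
    (hx : TruncatedWittVector.truncate (Nat.le_succ m) x = 0) :
    (p : TruncatedWittVector p (m+1) F) * x = 0 := by
  obtain ⟨a, ha⟩ := ker_lift p F x hx
  have hp1 : (p : WittVector p F) = verschiebung^[1] (frobenius 1) := by
    rw [Function.iterate_one, verschiebung_frobenius, one_mul]
  calc (p : TruncatedWittVector p (m+1) F) * x
      = WittVector.truncate (m+1) ((p : WittVector p F) * verschiebung^[m] a) := by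
        rw [map_mul, ha, map_natCast]
    _ = 0 := by
        rw [hp1, iterate_verschiebung_mul]
        exact trunc_iter_versch_eq_zero p F (by omega) _

end TLift

namespace TLift

variable (p : ℕ) [hp : Fact p.Prime] (F : Type*) [Field F] [Fintype F] [CharP F p]

/-- the finite truncated general linear groups -/
abbrev Gl (n : ℕ) := (Matrix (Fin 2) (Fin 2) (TruncatedWittVector p n F))ˣ

/-- truncation between consecutive levels -/
noncomputable abbrev τ (m : ℕ) : TruncatedWittVector p (m+1) F →+* TruncatedWittVector p m F :=
  TruncatedWittVector.truncate (Nat.le_succ m)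

lemma isUnit_of_trunc {m : ℕ} (hm : 1 ≤ m) (x : TruncatedWittVector p (m+1) F)
    (h : IsUnit (τ p F m x)) : IsUnit x := by
  obtain ⟨u, hu⟩ := h
  obtain ⟨b, hb⟩ := TruncatedWittVector.truncate_surjective (p := p) (Nat.le_succ m)
    ((u⁻¹ : (TruncatedWittVector p m F)ˣ) : TruncatedWittVector p m F)
  set ε := x * b - 1 with hε
  have hker : τ p F m ε = 0 := by
    rw [hε, map_sub, map_mul, map_one, ← hu, hb, Units.mul_inv, sub_self]
  have hε2 : ε * ε = 0 := ker_mul_eq_zero p F hm ε ε hker hker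
  refine IsUnit.of_mul_eq_one (a := x) (b * (1 - ε)) ?_
  have : x * b = 1 + ε := by rw [hε]; ring
  calc x * (b * (1 - ε)) = (x * b) * (1 - ε) := by ring
    _ = (1 + ε) * (1 - ε) := by rw [this]
    _ = 1 - ε * ε + (ε - ε) := by ring
    _ = 1 := by rw [hε2, sub_self, sub_zero, add_zero]

/-- the reduction homomorphism between consecutive truncated GL₂'s -/
noncomputable def πm (m : ℕ) : Gl p F (m+1) →* Gl p F m :=
  Units.map (RingHom.toMonoidHom (RingHom.mapMatrix (τ p F m)))

lemma πm_val (m : ℕ) (U : Gl p F (m+1)) :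
    ((πm p F m U : Matrix (Fin 2) (Fin 2) (TruncatedWittVector p m F))) =
      (U : Matrix (Fin 2) (Fin 2) (TruncatedWittVector p (m+1) F)).map (τ p F m) := rfl

lemma πm_surjective {m : ℕ} (hm : 1 ≤ m) : Function.Surjective (πm p F m) := by
  intro V
  have hlift : ∀ i j : Fin 2, ∃ a, τ p F m a =
      (V : Matrix (Fin 2) (Fin 2) (TruncatedWittVector p m F)) i j := fun i j =>
    TruncatedWittVector.truncate_surjective (p := p) (Nat.le_succ m) _
  choose Mf hMf using hlift
  set M : Matrix (Fin 2) (Fin 2) (TruncatedWittVector p (m+1) F) := Matrix.of Mf with hM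
  have hmap : M.map (τ p F m) = (V : Matrix (Fin 2) (Fin 2) (TruncatedWittVector p m F)) := by
    ext i j : 1
    exact hMf i j
  have hdet : IsUnit M.det := by
    apply isUnit_of_trunc p F hm
    rw [RingHom.map_det, RingHom.mapMatrix_apply, hmap]
    exact (Matrix.isUnit_iff_isUnit_det _).mp V.isUnit
  obtain ⟨U, hU⟩ : IsUnit M := (Matrix.isUnit_iff_isUnit_det _).mpr hdet
  refine ⟨U, Units.ext ?_⟩
  rw [πm_val, hU, hmap]

lemma pow_p_eq_one_of_ker {m : ℕ} (hm : 1 ≤ m) (U : Gl p F (m+1))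
    (h : πm p F m U = 1) : U ^ p = 1 := by
  set X : Matrix (Fin 2) (Fin 2) (TruncatedWittVector p (m+1) F) :=
    (U : Matrix (Fin 2) (Fin 2) (TruncatedWittVector p (m+1) F)) - 1 with hX
  have hker : ∀ i j, τ p F m (X i j) = 0 := by
    intro i j
    have hval : (U : Matrix (Fin 2) (Fin 2) (TruncatedWittVector p (m+1) F)).map (τ p F m) = 1 := by
      rw [← πm_val, h, Units.val_one]
    have hentry := congrFun (congrFun hval i) j
    rw [Matrix.map_apply] at hentry
    simp only [hX, Matrix.sub_apply, map_sub, hentry]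
    by_cases hij : i = j
    · subst hij; simp [Matrix.one_apply_eq]
    · simp [Matrix.one_apply_ne hij]
  have hX2 : X * X = 0 := by
    ext i j : 1
    rw [Matrix.mul_apply, Matrix.zero_apply]
    refine Finset.sum_eq_zero fun l _ => ?_
    exact ker_mul_eq_zero p F hm _ _ (hker i l) (hker l j)
  have hpX : (p : ℕ) • X = 0 := by
    ext i j : 1
    rw [Matrix.smul_apply, Matrix.zero_apply, nsmul_eq_mul]
    exact ker_pmul_eq_zero p F _ (hker i j)
  have hpow : ∀ n : ℕ, (1 + X) ^ n = 1 + n • X := by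
    intro n
    induction n with
    | zero => simp
    | succ n ih =>
      rw [pow_succ, ih]
      have h1 : (1 + n • X) * (1 + X) = 1 + X + n • X + n • (X * X) := by
        rw [add_mul, one_mul, mul_add, mul_one, smul_mul_assoc]
        abel
      rw [h1, hX2, smul_zero, add_zero, succ_nsmul]
      abel
  have hUval : (U : Matrix (Fin 2) (Fin 2) (TruncatedWittVector p (m+1) F)) = 1 + X := by
    simp only [hX]
    abel
  apply Units.ext
  rw [Units.val_pow_eq_pow_val, hUval, hpow, hpX, add_zero, Units.val_one]

end TLift

namespace TLift

variable (p : ℕ) [hp : Fact p.Prime] (F : Type*) [Field F] [Fintype F] [CharP F p]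

/-- the first coefficient, as a ring homomorphism on 1-truncated Witt vectors -/
noncomputable def ψ : TruncatedWittVector p 1 F →+* F :=
  (WittVector.truncate 1).liftOfSurjective (WittVector.truncate_surjective p 1 F)
    ⟨WittVector.constantCoeff, by
      intro x hx
      have hx' : ∀ i < 1, x.coeff i = 0 := (WittVector.mem_ker_truncate 1 x).mp hx
      rw [RingHom.mem_ker]
      simpa using hx' 0 zero_lt_one⟩

lemma ψ_truncate (x : WittVector p F) : ψ p F (WittVector.truncate 1 x) = x.coeff 0 :=
  RingHom.liftOfRightInverse_comp_apply _ _ _ _ x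

lemma ψ_bijective : Function.Bijective (ψ p F) := by
  constructor
  · intro x y hxy
    obtain ⟨a, rfl⟩ := WittVector.truncate_surjective p 1 F x
    obtain ⟨b, rfl⟩ := WittVector.truncate_surjective p 1 F y
    rw [ψ_truncate, ψ_truncate] at hxy
    apply TruncatedWittVector.ext
    intro i
    have h0 : i = (0 : Fin 1) := Subsingleton.elim _ _
    subst h0
    rw [WittVector.coeff_truncate, WittVector.coeff_truncate]
    exact hxy
  · intro c
    refine ⟨WittVector.truncate 1 (WittVector.mk p (fun _ => c)), ?_⟩
    rw [ψ_truncate, WittVector.coeff_mk]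

/-- `F` is isomorphic to the 1-truncated Witt vectors -/
noncomputable def eF : F ≃+* TruncatedWittVector p 1 F :=
  (RingEquiv.ofBijective (ψ p F) (ψ_bijective p F)).symm

lemma ψ_eF (c : F) : ψ p F (eF p F c) = c :=
  (RingEquiv.ofBijective (ψ p F) (ψ_bijective p F)).apply_symm_apply c

end TLift

namespace TLift

lemma card_range_comp {M N P : Type*} [Group M] [Group N] [Group P]
    (ρ : M →* N) (f : N →* P) (hf : Function.Injective f) :
    Nat.card (f.comp ρ).range = Nat.card ρ.range := by
  refine (Nat.card_congr (Equiv.ofBijective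
    (fun (x : ρ.range) => (⟨f x.1, ?_⟩ : (f.comp ρ).range)) ⟨?_, ?_⟩)).symm
  · obtain ⟨g, hg⟩ := x.2
    exact ⟨g, by rw [MonoidHom.comp_apply, hg]⟩
  · intro x y hxy
    exact Subtype.ext (hf (congrArg Subtype.val hxy))
  · rintro ⟨z, g, rfl⟩
    exact ⟨⟨ρ g, ⟨g, rfl⟩⟩, rfl⟩

variable (p : ℕ) [hp : Fact p.Prime] (F : Type*) [Field F] [Fintype F] [CharP F p]
variable (G : Type*) [Group G] [Finite G]

lemma step_exists (m : ℕ) (hm : 1 ≤ m) (ρ : G →* Gl p F m)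
    (h1 : Nat.Coprime (Nat.card ρ.range) p) :
    ∃ ρ' : G →* Gl p F (m+1), (πm p F m).comp ρ' = ρ ∧
      Nat.Coprime (Nat.card ρ'.range) p ∧
      ∀ g₁ g₂ : G, ρ g₁ = ρ g₂ → ρ' g₁ = ρ' g₂ := by
  classical
  set H : Subgroup (Gl p F m) := ρ.range with hH
  set P : Subgroup (Gl p F (m+1)) := H.comap (πm p F m) with hP
  set f : ↥P →* Gl p F m := (πm p F m).comp P.subtype with hf
  have hfrange : f.range = H := by
    apply le_antisymm
    · rintro x ⟨y, rfl⟩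
      exact y.2
    · intro h hh
      obtain ⟨x, hx⟩ := πm_surjective p F hm h
      exact ⟨⟨x, by rw [hP, Subgroup.mem_comap, hx]; exact hh⟩, hx⟩
  -- the kernel is a p-group
  have hker_pow : ∀ x : ↥P, x ∈ f.ker → x ^ p = 1 := by
    intro x hx
    have hval : (x : Gl p F (m+1)) ^ p = 1 := pow_p_eq_one_of_ker p F hm _ (by
      rw [MonoidHom.mem_ker, hf, MonoidHom.comp_apply] at hx
      exact hx)
    apply Subtype.ext
    rw [SubmonoidClass.coe_pow, OneMemClass.coe_one]
    exact hval
  have hpgroup : IsPGroup p f.ker := by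
    intro x
    refine ⟨1, ?_⟩
    rw [pow_one]
    apply Subtype.ext
    rw [SubmonoidClass.coe_pow, OneMemClass.coe_one]
    exact hker_pow x.1 x.2
  obtain ⟨k, hk⟩ := hpgroup.exists_card_eq
  have hcoprime : Nat.Coprime (Nat.card f.ker) f.ker.index := by
    rw [hk, Subgroup.index_ker, hfrange]
    exact Nat.Coprime.pow_left k (Nat.Coprime.symm h1)
  obtain ⟨C, hC⟩ := Subgroup.exists_right_complement'_of_coprime hcoprime
  let fC : ↥C →* Gl p F m := f.comp C.subtype
  have hCinj : Function.Injective fC := by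
    intro c c' hcc
    have hmem : (c : ↥P) * (c' : ↥P)⁻¹ ∈ f.ker := by
      rw [MonoidHom.mem_ker, map_mul, map_inv]
      have hcc' : f c.1 = f c'.1 := hcc
      rw [hcc']
      simp
    have hmemC : (c : ↥P) * (c' : ↥P)⁻¹ ∈ C := mul_mem c.2 (inv_mem c'.2)
    have h1 : (c : ↥P) * (c' : ↥P)⁻¹ = 1 :=
      Subgroup.disjoint_def.mp hC.disjoint hmem hmemC
    exact Subtype.ext (mul_inv_eq_one.mp h1)
  have hCmem : ∀ c : ↥C, fC c ∈ H := by
    intro c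
    rw [← hfrange]
    exact ⟨C.subtype c, rfl⟩
  let e0 : ↥C →* ↥H := fC.codRestrict H hCmem
  have he0bij : Function.Bijective e0 := by
    constructor
    · intro c c' h
      exact hCinj (congrArg Subtype.val h)
    · rintro ⟨h, hh⟩
      rw [← hfrange] at hh
      obtain ⟨x, hx⟩ := hh
      obtain ⟨⟨n, c⟩, hnc, -⟩ := hC.existsUnique x
      refine ⟨⟨c.1, c.2⟩, ?_⟩
      apply Subtype.ext
      show fC ⟨c.1, c.2⟩ = h
      have hfx : f x = h := hx
      rw [← hfx, ← hnc]
      have hn1 : f n.1 = 1 := n.2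
      show f c.1 = f (n.1 * c.1)
      rw [map_mul, hn1, one_mul]
  let e : ↥C ≃* ↥H := MulEquiv.ofBijective e0 he0bij
  let ι : ↥C →* Gl p F (m+1) := P.subtype.comp C.subtype
  let ρ' : G →* Gl p F (m+1) := ι.comp ((e.symm.toMonoidHom).comp ρ.rangeRestrict)
  have hcompat_app : ∀ g : G, πm p F m (ρ' g) = ρ g := by
    intro g
    have h1 : ρ' g = ι (e.symm (ρ.rangeRestrict g)) := rfl
    have h2 : πm p F m (ι (e.symm (ρ.rangeRestrict g)))
        = fC (e.symm (ρ.rangeRestrict g)) := rfl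
    have h3 : fC (e.symm (ρ.rangeRestrict g))
        = ((e (e.symm (ρ.rangeRestrict g)) : ↥H) : Gl p F m) := rfl
    rw [h1, h2, h3, MulEquiv.apply_symm_apply]
    rfl
  have hcompat : (πm p F m).comp ρ' = ρ := MonoidHom.ext hcompat_app
  have hinj_on : ∀ g₁ g₂ : G, πm p F m (ρ' g₁) = πm p F m (ρ' g₂) → ρ' g₁ = ρ' g₂ := by
    intro g₁ g₂ hg
    rw [hcompat_app, hcompat_app] at hg
    have hrr : ρ.rangeRestrict g₁ = ρ.rangeRestrict g₂ := Subtype.ext hg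
    show ι (e.symm (ρ.rangeRestrict g₁)) = ι (e.symm (ρ.rangeRestrict g₂))
    rw [hrr]
  have hcard : Nat.card ρ'.range = Nat.card ρ.range := by
    refine Nat.card_congr (Equiv.ofBijective
      (fun (x : ρ'.range) => (⟨πm p F m x.1, ?_⟩ : ρ.range)) ⟨?_, ?_⟩)
    · obtain ⟨g, hg⟩ := x.2
      exact ⟨g, by rw [← hg, hcompat_app]⟩
    · rintro ⟨x, gx, rfl⟩ ⟨y, gy, rfl⟩ hxy
      have := hinj_on gx gy (congrArg Subtype.val hxy)
      exact Subtype.ext this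
    · rintro ⟨z, g, rfl⟩
      exact ⟨⟨ρ' g, ⟨g, rfl⟩⟩, Subtype.ext (hcompat_app g)⟩
  refine ⟨ρ', hcompat, ?_, ?_⟩
  · rw [hcard]; exact h1
  · intro g₁ g₂ h12
    apply hinj_on
    rw [hcompat_app, hcompat_app, h12]

end TLift

namespace TLift

variable (p : ℕ) [hp : Fact p.Prime] (F : Type*) [Field F] [Fintype F] [CharP F p]
variable (G : Type*) [Group G] [Finite G]

/-- the base level of the tower: `ρbar` transported along `F ≃ TruncatedWittVector p 1 F` -/
noncomputable def base (ρbar : G →* (Matrix (Fin 2) (Fin 2) F)ˣ) : G →* Gl p F 1 :=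
  (Units.map (RingHom.toMonoidHom
    (RingHom.mapMatrix ((eF p F : F ≃+* TruncatedWittVector p 1 F) : F →+* TruncatedWittVector p 1 F)))).comp ρbar

lemma base_val (ρbar : G →* (Matrix (Fin 2) (Fin 2) F)ˣ) (g : G) (i j : Fin 2) :
    ((base p F G ρbar g : Matrix (Fin 2) (Fin 2) (TruncatedWittVector p 1 F))) i j =
      eF p F ((ρbar g : Matrix (Fin 2) (Fin 2) F) i j) := rfl

lemma base_card (ρbar : G →* (Matrix (Fin 2) (Fin 2) F)ˣ) :
    Nat.card (base p F G ρbar).range = Nat.card ρbar.range := by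
  apply card_range_comp
  intro u v huv
  apply Units.ext
  have hval := congrArg Units.val huv
  have hmat : ∀ i j : Fin 2,
      eF p F ((u : Matrix (Fin 2) (Fin 2) F) i j) = eF p F ((v : Matrix (Fin 2) (Fin 2) F) i j) :=
    fun i j => congrFun (congrFun hval i) j
  ext i j : 1
  exact (eF p F).injective (hmat i j)

/-- the tower of compatible lifts -/
noncomputable def tower (ρbar : G →* (Matrix (Fin 2) (Fin 2) F)ˣ)
    (hord : Nat.Coprime (Nat.card ρbar.range) p) :
    ∀ n : ℕ, {ρ : G →* Gl p F (n+1) // Nat.Coprime (Nat.card ρ.range) p ∧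
      ∀ g₁ g₂ : G, ρbar g₁ = ρbar g₂ → ρ g₁ = ρ g₂}
  | 0 => ⟨base p F G ρbar, by rw [base_card]; exact hord,
      fun g₁ g₂ h => by unfold base; rw [MonoidHom.comp_apply, MonoidHom.comp_apply, h]⟩
  | (n+1) =>
    ⟨Classical.choose (step_exists p F G (n+1) (Nat.le_add_left 1 n)
        (tower ρbar hord n).1 (tower ρbar hord n).2.1),
     (Classical.choose_spec (step_exists p F G (n+1) (Nat.le_add_left 1 n)
        (tower ρbar hord n).1 (tower ρbar hord n).2.1)).2.1,
     fun g₁ g₂ h =>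
       (Classical.choose_spec (step_exists p F G (n+1) (Nat.le_add_left 1 n)
          (tower ρbar hord n).1 (tower ρbar hord n).2.1)).2.2 g₁ g₂
          ((tower ρbar hord n).2.2 g₁ g₂ h)⟩

lemma tower_compat (ρbar : G →* (Matrix (Fin 2) (Fin 2) F)ˣ)
    (hord : Nat.Coprime (Nat.card ρbar.range) p) (n : ℕ) :
    (πm p F (n+1)).comp (tower p F G ρbar hord (n+1)).1 = (tower p F G ρbar hord n).1 :=
  (Classical.choose_spec (step_exists p F G (n+1) (Nat.le_add_left 1 n)
      (tower p F G ρbar hord n).1 (tower p F G ρbar hord n).2.1)).1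

end TLift

namespace TLift

variable (p : ℕ) [hp : Fact p.Prime] (F : Type*) [Field F] [Fintype F] [CharP F p]
variable (G : Type*) [Group G] [Finite G]
variable (ρbar : G →* (Matrix (Fin 2) (Fin 2) F)ˣ)
variable (hord : Nat.Coprime (Nat.card ρbar.range) p)

lemma tower_coh (k n : ℕ) (hkn : k ≤ n) (g : G) (i j : Fin 2) :
    (((tower p F G ρbar hord n).1 g : Matrix (Fin 2) (Fin 2) (TruncatedWittVector p (n+1) F)) i j).coeff
        ⟨k, by omega⟩ =
      (((tower p F G ρbar hord k).1 g : Matrix (Fin 2) (Fin 2) (TruncatedWittVector p (k+1) F)) i j).coeff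
        ⟨k, Nat.lt_succ_self k⟩ := by
  induction n with
  | zero =>
    have hk0 : k = 0 := by omega
    subst hk0
    rfl
  | succ n ih =>
    rcases Nat.eq_or_lt_of_le hkn with heq | hlt
    · subst heq
      rfl
    · have hkn' : k ≤ n := by omega
      have hcomp := DFunLike.congr_fun (tower_compat p F G ρbar hord n) g
      have hval : ((tower p F G ρbar hord n).1 g : Matrix (Fin 2) (Fin 2) (TruncatedWittVector p (n+1) F)) i j
          = τ p F (n+1) (((tower p F G ρbar hord (n+1)).1 g :
              Matrix (Fin 2) (Fin 2) (TruncatedWittVector p (n+2) F)) i j) := by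
        rw [← hcomp]
        rfl
      have hih := ih hkn'
      rw [hval] at hih
      rw [← hih]
      exact (TruncatedWittVector.coeff_truncate (Nat.le_succ (n+1)) ⟨k, by omega⟩ _).symm

/-- the limit matrix over the Witt vectors -/
noncomputable def Mlim (g : G) : Matrix (Fin 2) (Fin 2) (WittVector p F) :=
  Matrix.of fun i j => WittVector.mk p (fun n =>
    (((tower p F G ρbar hord n).1 g : Matrix (Fin 2) (Fin 2) (TruncatedWittVector p (n+1) F)) i j).coeff
      ⟨n, Nat.lt_succ_self n⟩)

lemma trunc_Mlim (g : G) (n : ℕ) (i j : Fin 2) :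
    WittVector.truncate (n+1) (Mlim p F G ρbar hord g i j) =
      ((tower p F G ρbar hord n).1 g : Matrix (Fin 2) (Fin 2) (TruncatedWittVector p (n+1) F)) i j := by
  apply TruncatedWittVector.ext
  intro k
  rw [WittVector.coeff_truncate]
  show (WittVector.mk p _).coeff k = _
  rw [WittVector.coeff_mk]
  exact (tower_coh p F G ρbar hord k.1 n (by omega) g i j).symm

lemma Mlim_map (g : G) (n : ℕ) :
    (Mlim p F G ρbar hord g).map (WittVector.truncate (n+1)) =
      ((tower p F G ρbar hord n).1 g : Matrix (Fin 2) (Fin 2) (TruncatedWittVector p (n+1) F)) := by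
  ext i j : 1
  rw [Matrix.map_apply]
  exact trunc_Mlim p F G ρbar hord g n i j

lemma wv_eq_of_trunc (x y : WittVector p F)
    (h : ∀ n, WittVector.truncate (n+1) x = WittVector.truncate (n+1) y) : x = y := by
  ext n
  have h2 := congrArg (fun t => TruncatedWittVector.coeff (⟨n, Nat.lt_succ_self n⟩ : Fin (n+1)) t) (h n)
  simpa [WittVector.coeff_truncate] using h2

lemma matrix_eq_of_trunc (X Y : Matrix (Fin 2) (Fin 2) (WittVector p F))
    (h : ∀ n, X.map (WittVector.truncate (n+1)) = Y.map (WittVector.truncate (n+1))) : X = Y := by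
  ext i j : 1
  apply wv_eq_of_trunc p F
  intro n
  have h2 := congrFun (congrFun (h n) i) j
  simpa [Matrix.map_apply] using h2

lemma Mlim_mul (g h : G) :
    Mlim p F G ρbar hord g * Mlim p F G ρbar hord h = Mlim p F G ρbar hord (g * h) := by
  apply matrix_eq_of_trunc
  intro n
  rw [Matrix.map_mul, Mlim_map, Mlim_map, Mlim_map, ← Units.val_mul,
    ← map_mul ((tower p F G ρbar hord n).1)]

lemma Mlim_one : Mlim p F G ρbar hord 1 = 1 := by
  apply matrix_eq_of_trunc
  intro n
  rw [Mlim_map, map_one, Units.val_one, Matrix.map_one _ (map_zero _) (map_one _)]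

/-- the lifted representation -/
noncomputable def lift : G →* (Matrix (Fin 2) (Fin 2) (WittVector p F))ˣ :=
  MonoidHom.mk' (fun g =>
    { val := Mlim p F G ρbar hord g
      inv := Mlim p F G ρbar hord g⁻¹
      val_inv := by rw [Mlim_mul, mul_inv_cancel, Mlim_one]
      inv_val := by rw [Mlim_mul, inv_mul_cancel, Mlim_one] })
    (fun g h => Units.ext (Mlim_mul p F G ρbar hord g h).symm)

lemma lift_val (g : G) :
    ((lift p F G ρbar hord g : Matrix (Fin 2) (Fin 2) (WittVector p F))) =
      Mlim p F G ρbar hord g := rfl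

lemma lift_reduce (g : G) :
    (Mlim p F G ρbar hord g).map (WittVector.constantCoeff (p := p)) =
      (ρbar g : Matrix (Fin 2) (Fin 2) F) := by
  ext i j : 1
  rw [Matrix.map_apply]
  have h0 : WittVector.constantCoeff (Mlim p F G ρbar hord g i j) =
      ψ p F (WittVector.truncate 1 (Mlim p F G ρbar hord g i j)) := by
    rw [ψ_truncate]
    rfl
  rw [h0, trunc_Mlim]
  have hbase : ((tower p F G ρbar hord 0).1 g :
      Matrix (Fin 2) (Fin 2) (TruncatedWittVector p 1 F)) i j =
      eF p F ((ρbar g : Matrix (Fin 2) (Fin 2) F) i j) := rfl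
  rw [hbase, ψ_eF]

end TLift

/-- Teichmüller lifting: a two-dimensional representation of a finite group over a finite
field `F` of characteristic `p` whose image has order prime to `p` lifts to the Witt vectors
`W(F)`, compatibly with the reduction map (the constant coefficient), and the reduction is
injective on the image of the lift. -/
theorem teichmuller_lift_of_coprime_order (p : ℕ) [Fact p.Prime]
    (F : Type*) [Field F] [Fintype F] [CharP F p]
    (G : Type*) [Group G] [Finite G]
    (ρbar : G →* (Matrix (Fin 2) (Fin 2) F)ˣ)
    (hord : Nat.Coprime (Nat.card ρbar.range) p) :
    ∃ ρ' : G →* (Matrix (Fin 2) (Fin 2) (WittVector p F))ˣ,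
      (∀ g : G, ((ρ' g : Matrix (Fin 2) (Fin 2) (WittVector p F))).map
          (WittVector.constantCoeff (p := p)) = (ρbar g : Matrix (Fin 2) (Fin 2) F)) ∧
      ∀ g₁ g₂ : G,
        ((ρ' g₁ : Matrix (Fin 2) (Fin 2) (WittVector p F))).map
            (WittVector.constantCoeff (p := p)) =
          ((ρ' g₂ : Matrix (Fin 2) (Fin 2) (WittVector p F))).map
            (WittVector.constantCoeff (p := p)) → ρ' g₁ = ρ' g₂ := by
  refine ⟨TLift.lift p F G ρbar hord, ?_, ?_⟩
  · intro g
    rw [TLift.lift_val]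
    exact TLift.lift_reduce p F G ρbar hord g
  · intro g₁ g₂ h12
    rw [TLift.lift_val, TLift.lift_val, TLift.lift_reduce, TLift.lift_reduce] at h12
    have hbar : ρbar g₁ = ρbar g₂ := Units.ext h12
    have htower : ∀ n, (TLift.tower p F G ρbar hord n).1 g₁ =
        (TLift.tower p F G ρbar hord n).1 g₂ :=
      fun n => (TLift.tower p F G ρbar hord n).2.2 g₁ g₂ hbar
    apply Units.ext
    rw [TLift.lift_val, TLift.lift_val]
    apply TLift.matrix_eq_of_trunc
    intro n
    rw [TLift.Mlim_map, TLift.Mlim_map, htower n]
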